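/- arXiv:1302.1900 — 8 statements merged into one kernel-verified Lean document; each statement's English description precedes it below -/
import Mathlib

section
/- Fix an integer m ≥ 2 and let (t_n)_{n≥0} be the TM_m sequence. Then there is no nonnegative integer j with t_j = t_{j+1} = t_{j+2}; that is, the TM_m sequence never takes the same value at three consecutive indices. -/
/-- The `TM_m` sequence: `t n = (sum of base-m digits of n) % m`. -/
def tm (m n : ℕ) : ℕ := (Nat.digits m n).sum % m

lemma tm_digit_sum_succ (m n : ℕ) (hm : 2 ≤ m) (h : n % m + 1 < m) :
    (Nat.digits m (n + 1)).sum = (Nat.digits m n).sum + 1 := by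
  rcases Nat.eq_zero_or_pos n with rfl | hn
  · rw [Nat.digits_def' (by omega : 1 < m) (by omega)]
    simp [Nat.mod_eq_of_lt (by omega : 1 < m), Nat.div_eq_of_lt (by omega : 1 < m)]
  · have hd : n = m * (n / m) + n % m := (Nat.div_add_mod n m).symm
    have h1 : (n + 1) % m = n % m + 1 := by
      conv_lhs => rw [show n + 1 = m * (n / m) + (n % m + 1) by omega]
      rw [Nat.mul_add_mod, Nat.mod_eq_of_lt h]
    have h2 : (n + 1) / m = n / m := by
      conv_lhs => rw [show n + 1 = n % m + 1 + m * (n / m) by omega]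
      rw [Nat.add_mul_div_left _ _ (by omega : 0 < m), Nat.div_eq_of_lt h]
      omega
    rw [Nat.digits_def' (by omega : 1 < m) (by omega : 0 < n + 1),
        Nat.digits_def' (by omega : 1 < m) hn, h1, h2]
    simp [List.sum_cons]; omega

lemma tm_succ_ne (m n : ℕ) (hm : 2 ≤ m) (h : n % m + 1 < m) :
    tm m n ≠ tm m (n + 1) := by
  unfold tm
  rw [tm_digit_sum_succ m n hm h]
  intro hc
  have : (Nat.digits m n).sum ≡ (Nat.digits m n).sum + 1 [MOD m] := hc
  have := (Nat.modEq_iff_dvd' (Nat.le_succ _)).mp this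
  simp at this
  omega

/-- The `TM_m` sequence never takes the same value at three consecutive indices. -/
theorem tm_no_three_consecutive_equal (m : ℕ) (hm : 2 ≤ m) :
    ¬ ∃ j : ℕ, tm m j = tm m (j + 1) ∧ tm m (j + 1) = tm m (j + 2) := by
  rintro ⟨j, h1, h2⟩
  have hmod : ∀ n, tm m n = tm m (n + 1) → n % m = m - 1 := by
    intro n hn
    by_contra hne
    have hlt : n % m < m := Nat.mod_lt _ (by omega)
    exact tm_succ_ne m n hm (by omega) hn
  have e1 := hmod j h1
  have e2 := hmod (j + 1) h2
  have hdvd : m ∣ j + 1 := by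
    have hd := Nat.div_add_mod j m
    exact ⟨j / m + 1, by rw [Nat.mul_add, Nat.mul_one]; omega⟩
  have h0 : (j + 1) % m = 0 := by
    obtain ⟨k, hk⟩ := hdvd
    rw [hk]; exact Nat.mul_mod_right m k
  omega
end

section
/- For every integer m ≥ 2, the TM_m sequence (t_n)_{n≥0} is not eventually periodic; that is, there do not exist a nonnegative integer a and a positive integer b such that t_{a+n} = t_{a+n+b} for all nonnegative integers n. -/
lemma digits_len_le_of_lt_pow {b n k : ℕ} (hb : 1 < b) (h : n < b ^ k) :
    (Nat.digits b n).length ≤ k := by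
  rcases Nat.eq_zero_or_pos n with rfl | hn
  · simp
  rw [Nat.digits_len b n hb hn.ne']
  exact Nat.log_lt_of_lt_pow hn.ne' h

lemma sum_digits_add_pow_mul {b n k c : ℕ} (hb : 1 < b) (hc : 0 < c) (h : n < b ^ k) :
    (Nat.digits b (n + b ^ k * c)).sum = (Nat.digits b n).sum + (Nat.digits b c).sum := by
  have hlen : (Nat.digits b n).length ≤ k := digits_len_le_of_lt_pow hb h
  obtain ⟨j, hj⟩ := Nat.le.dest hlen
  rw [← hj, ← Nat.digits_append_zeroes_append_digits hb hc]
  simp [List.sum_append, List.sum_replicate]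

lemma sum_digits_base_one {b : ℕ} (hb : 1 < b) : (Nat.digits b 1).sum = 1 := by
  rw [Nat.digits_def' hb one_pos]
  simp [Nat.mod_eq_of_lt hb, Nat.div_eq_of_lt hb]

lemma tm_pow {m : ℕ} (hm : 2 ≤ m) (k : ℕ) : tm m (m ^ k) = 1 := by
  have hm1 : 1 < m := hm
  have : (Nat.digits m (m ^ k)).sum = 1 := by
    have h := sum_digits_add_pow_mul (b := m) (n := 0) (k := k) (c := 1) hm1 one_pos
      (Nat.pow_pos (by omega))
    simpa [sum_digits_base_one hm1] using h
  simp [tm, this, Nat.mod_eq_of_lt hm1]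

lemma sum_digits_sub {m b k : ℕ} (hm : 2 ≤ m) (hb : 0 < b) (hbk : b ≤ m ^ k) :
    (Nat.digits m (m ^ (k + 1) - b)).sum = (m - 1) + (Nat.digits m (m ^ k - b)).sum := by
  have hm1 : 1 < m := hm
  have h1 : m ^ (k + 1) - b = (m ^ k - b) + m ^ k * (m - 1) := by
    have h3 : m ^ (k + 1) = m ^ k * m := pow_succ m k
    have hmk : 0 < m ^ k := Nat.pow_pos (by omega)
    have hms : m ^ k * (m - 1) + m ^ k = m ^ k * m := by
      rw [← Nat.mul_succ]
      congr 1
      omega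
    omega
  have h2 : m ^ k - b < m ^ k := by
    have hmk : 0 < m ^ k := Nat.pow_pos (by omega)
    omega
  have hdig : Nat.digits m (m - 1) = [m - 1] := by
    rw [Nat.digits_def' hm1 (by omega)]
    rw [Nat.mod_eq_of_lt (by omega), Nat.div_eq_of_lt (by omega)]
    simp
  rw [h1, sum_digits_add_pow_mul hm1 (by omega) h2, hdig]
  simp [Nat.add_comm]

/-- The `TM_m` sequence is not eventually periodic. -/
theorem tm_not_eventually_periodic (m : ℕ) (hm : 2 ≤ m) :
    ¬ ∃ (a b : ℕ), 0 < b ∧ ∀ n : ℕ, tm m (a + n) = tm m (a + n + b) := by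
  rintro ⟨a, b, hb, hper⟩
  have hm1 : 1 < m := hm
  -- pick k with m ^ k ≥ a + b
  obtain ⟨k, hk⟩ : ∃ k, a + b ≤ m ^ k := by
    refine ⟨a + b, le_trans (Nat.lt_two_pow_self (n := a + b)).le ?_⟩
    exact Nat.pow_le_pow_left hm _
  have hmono : ∀ i j : ℕ, i ≤ j → m ^ i ≤ m ^ j := fun i j h =>
    Nat.pow_le_pow_right (by omega) h
  -- periodicity at x ≥ a : tm m x = tm m (x + b)
  have hper' : ∀ x, a ≤ x → tm m x = tm m (x + b) := by
    intro x hx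
    have := hper (x - a)
    rwa [Nat.add_sub_cancel' hx] at this
  -- key: for j ≥ 1, tm m (m ^ (k + j) - b) = 1
  have key : ∀ j, tm m (m ^ (k + j + 1) - b) = 1 := by
    intro j
    have h1 : b ≤ m ^ (k + j + 1) := le_trans (by omega) (le_trans hk (hmono _ _ (by omega)))
    have h2 : a ≤ m ^ (k + j + 1) - b := by
      have := le_trans hk (hmono k (k + j + 1) (by omega))
      omega
    have := hper' _ h2
    rw [Nat.sub_add_cancel h1] at this
    rw [this, tm_pow hm]
  -- now derive contradiction using k+1 and k+2
  have e1 := key 0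
  have e2 := key 1
  have hbk1 : b ≤ m ^ (k + 1) := le_trans (by omega) (le_trans hk (hmono _ _ (by omega)))
  have hs2 : (Nat.digits m (m ^ (k + 2) - b)).sum
      = (m - 1) + (Nat.digits m (m ^ (k + 1) - b)).sum := by
    have := sum_digits_sub (k := k + 1) hm hb hbk1
    simpa [show k + 1 + 1 = k + 2 by ring] using this
  -- e1 : sum (digits (m^(k+1) - b)) % m = 1 ; e2 similarly for k+2
  unfold tm at e1 e2
  rw [show k + 0 + 1 = k + 1 by ring] at e1
  rw [show k + 1 + 1 = k + 2 by ring] at e2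
  rw [hs2, Nat.add_mod, e1, Nat.mod_eq_of_lt (show m - 1 < m by omega)] at e2
  rw [show m - 1 + 1 = m by omega, Nat.mod_self] at e2
  omega
end

section
/- The TM_2 sequence (the classical Thue–Morse sequence) is palindromic: there exists a strictly increasing sequence of positive integers (n_j)_{j≥1} such that for every j and every k ∈ {0,…,n_j}, t_k(2) = t_{n_j − k}(2). -/
/-- A sequence `x` is palindromic if there is a strictly increasing sequence of
positive integers `nj` such that each initial segment `x 0, ..., x (nj j)` is a
palindrome. -/
def Palindromic (x : ℕ → ℕ) : Prop :=
  ∃ nj : ℕ → ℕ, StrictMono nj ∧ (∀ j, 0 < nj j) ∧ ∀ j, ∀ k ≤ nj j, x k = x (nj j - k)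

private lemma digits_two_sum_step (n : ℕ) :
    (Nat.digits 2 n).sum = n % 2 + (Nat.digits 2 (n / 2)).sum := by
  rcases Nat.eq_zero_or_pos n with h | h
  · simp [h]
  · rw [Nat.digits_def' (by norm_num : 1 < 2) h]; simp

private lemma digits_sum_complement :
    ∀ m : ℕ, ∀ k : ℕ, k < 2 ^ m →
      (Nat.digits 2 k).sum + (Nat.digits 2 (2 ^ m - 1 - k)).sum = m := by
  intro m
  induction m with
  | zero => intro k hk; interval_cases k; simp
  | succ m ih =>
    intro k hk
    have hq : k / 2 < 2 ^ m := by
      have : k < 2 * 2 ^ m := by rw [pow_succ] at hk; omega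
      omega
    have h1 := ih (k / 2) hq
    have hr : k % 2 < 2 := Nat.mod_lt _ (by norm_num)
    have heq : 2 ^ (m + 1) - 1 - k = 2 * (2 ^ m - 1 - k / 2) + (1 - k % 2) := by
      have h2 : 2 ^ (m + 1) = 2 * 2 ^ m := by ring
      have h3 : k = 2 * (k / 2) + k % 2 := (Nat.div_add_mod k 2).symm
      have h4 : 1 ≤ 2 ^ m := Nat.one_le_two_pow
      omega
    rw [heq]
    have hk2 := digits_two_sum_step k
    have hc2 := digits_two_sum_step (2 * (2 ^ m - 1 - k / 2) + (1 - k % 2))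
    have hmod : (2 * (2 ^ m - 1 - k / 2) + (1 - k % 2)) % 2 = 1 - k % 2 := by omega
    have hdiv : (2 * (2 ^ m - 1 - k / 2) + (1 - k % 2)) / 2 = 2 ^ m - 1 - k / 2 := by omega
    rw [hmod, hdiv] at hc2
    omega

/-- The classical Thue–Morse sequence is palindromic. -/
theorem tm_two_palindromic : Palindromic (tm 2) := by
  refine ⟨fun j => 4 ^ (j + 1) - 1, ?_, ?_, ?_⟩
  · intro a b hab
    show 4 ^ (a + 1) - 1 < 4 ^ (b + 1) - 1
    have h1 : (4:ℕ) ^ (a + 1) < 4 ^ (b + 1) :=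
      Nat.pow_lt_pow_right (by norm_num) (by omega)
    have h2 : 1 ≤ (4:ℕ) ^ (a + 1) := Nat.one_le_pow _ _ (by norm_num)
    omega
  · intro j
    show 0 < 4 ^ (j + 1) - 1
    have : (1:ℕ) < 4 ^ (j + 1) := Nat.one_lt_pow (by omega) (by norm_num)
    omega
  · intro j k hk
    have hk1 : k ≤ 4 ^ (j + 1) - 1 := hk
    show tm 2 k = tm 2 (4 ^ (j + 1) - 1 - k)
    have h4 : (4:ℕ) ^ (j + 1) = 2 ^ (2 * (j + 1)) := by
      rw [show (4:ℕ) = 2 ^ 2 by norm_num, ← pow_mul]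
    have hk' : k < 2 ^ (2 * (j + 1)) := by
      have h2 : 1 ≤ (2:ℕ) ^ (2 * (j + 1)) := Nat.one_le_two_pow
      omega
    have := digits_sum_complement (2 * (j + 1)) k hk'
    rw [h4]
    unfold tm
    omega
end

section
/- For every integer m ≥ 3, the TM_m sequence (t_n)_{n≥0} is not eventually palindromic: there is no N ≥ 0 such that the shifted sequence (t_{n+N})_{n≥0} is palindromic. -/
lemma digitsum_succ {m a : ℕ} (hm : 2 ≤ m) (h : ¬ m ∣ (a + 1)) :
    (Nat.digits m (a + 1)).sum = (Nat.digits m a).sum + 1 := by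
  have hm1 : 1 < m := by omega
  rcases Nat.eq_zero_or_pos a with rfl | ha
  · rw [Nat.zero_add, Nat.digits_def' hm1 one_pos, Nat.mod_eq_of_lt (by omega),
      Nat.div_eq_of_lt (by omega)]
    simp
  · have hmod0 : (a + 1) % m ≠ 0 := fun h0 => h (Nat.dvd_of_mod_eq_zero h0)
    have hmod : (a + 1) % m = a % m + 1 := by
      have h1 : (a + 1) % m = (a % m + 1) % m := by
        conv_lhs => rw [Nat.add_mod, Nat.mod_eq_of_lt hm1]
      have h2 : a % m < m := Nat.mod_lt _ (by omega)
      rcases Nat.lt_or_ge (a % m + 1) m with hlt | hge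
      · rw [h1, Nat.mod_eq_of_lt hlt]
      · have : a % m + 1 = m := by omega
        rw [h1, this, Nat.mod_self] at hmod0
        exact absurd rfl hmod0
    have hdiv : (a + 1) / m = a / m := by
      rw [Nat.succ_div, if_neg h]
      omega
    rw [Nat.digits_def' hm1 (by omega), Nat.digits_def' hm1 ha, hmod, hdiv]
    simp [List.sum_cons]
    omega

/-- For `m ≥ 3` the `TM_m` sequence is not eventually palindromic. -/
theorem tm_not_eventually_palindromic (m : ℕ) (hm : 3 ≤ m) :
    ¬ ∃ N : ℕ, Palindromic fun n => tm m (n + N) := by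
  rintro ⟨N, nj, hmono, hpos, hpal⟩
  have hm2 : 2 ≤ m := by omega
  set K := m * (N + 1) with hK
  have hKN : N + 2 ≤ K := by
    have h1 : 3 * (N + 1) ≤ m * (N + 1) := Nat.mul_le_mul_right _ hm
    omega
  set k := K - N with hk
  have hkN : k + N = K := by omega
  set n := nj (K + 2) with hn
  have hn2 : K + 2 ≤ n := hmono.le_apply
  have hk2 : k + 2 ≤ n := by omega
  have hp := hpal (K + 2)
  rw [← hn] at hp
  set S : ℕ → ZMod m := fun a => ((Nat.digits m a).sum : ZMod m) with hS
  have hScast : ∀ a b : ℕ, tm m a = tm m b → S a = S b := by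
    intro a b hab
    have := congrArg (fun x : ℕ => (x : ZMod m)) hab
    simpa [tm, hS, ZMod.natCast_mod] using this
  have hstep : ∀ a : ℕ, ¬ m ∣ (a + 1) → S (a + 1) = S a + 1 := by
    intro a ha
    show ((Nat.digits m (a + 1)).sum : ZMod m) = ((Nat.digits m a).sum : ZMod m) + 1
    rw [digitsum_succ hm2 ha]
    push_cast
    ring
  -- S at K, K+1, K+2
  have hdK : m ∣ K := ⟨N + 1, rfl⟩
  have sK1 : S (K + 1) = S K + 1 := hstep K (fun hd => by
    have h1 := Nat.dvd_sub hd hdK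
    simp at h1
    omega)
  have sK2 : S (K + 2) = S K + 2 := by
    have : S (K + 1 + 1) = S (K + 1) + 1 := hstep (K + 1) (fun hd => by
      have h1 := Nat.dvd_sub hd hdK
      have h2 : K + 2 - K = 2 := by omega
      rw [h2] at h1
      have := Nat.le_of_dvd (by omega) h1
      omega)
    rw [show K + 1 + 1 = K + 2 by ring] at this
    rw [this, sK1]; ring
  -- palindrome equations
  set B := n - (k + 2) + N with hB
  have hB1 : n - (k + 1) + N = B + 1 := by omega
  have hB2 : n - k + N = B + 2 := by omega
  have e0 : S (B + 2) = S K := by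
    rw [← hB2, ← hkN]
    exact (hScast _ _ (hp k (by omega))).symm
  have e1 : S (B + 1) = S K + 1 := by
    rw [← hB1, ← sK1, ← hkN, show k + N + 1 = k + 1 + N by ring]
    exact (hScast _ _ (hp (k + 1) (by omega))).symm
  have e2 : S B = S K + 2 := by
    rw [← sK2, ← hkN, show k + N + 2 = k + 2 + N by ring]
    have h' := hScast _ _ (hp (k + 2) (by omega))
    rw [← hB] at h'
    exact h'.symm
  -- contradiction
  have h2 : (2 : ZMod m) = 0 := by
    by_cases hd : m ∣ B + 1
    · have hnd : ¬ m ∣ B + 2 := fun hd2 => by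
        have h1 := Nat.dvd_sub hd2 hd
        simp at h1
        omega
      have := hstep (B + 1) (by rwa [show B + 1 + 1 = B + 2 by ring])
      rw [show B + 1 + 1 = B + 2 by ring, e0, e1] at this
      linear_combination -this
    · have := hstep B hd
      rw [e1, e2] at this
      linear_combination -this
  have h2' : ((2 : ℕ) : ZMod m) = 0 := by exact_mod_cast h2
  haveI : NeZero m := ⟨by omega⟩
  rw [ZMod.natCast_eq_zero_iff] at h2'
  have := Nat.le_of_dvd (by omega) h2'
  omega
end

section
/- Let (t_n)_{n≥0} be the TM_2 sequence. For every positive integer n and every k with 0 ≤ k ≤ 4^n − 1, one has t_k = t_{4^n − 1 − k}; that is, each initial segment of the Thue–Morse sequence of length 4^n is a palindrome. -/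
lemma tm_two_step (m b : ℕ) (hb : b < 2) : tm 2 (2 * m + b) = (tm 2 m + b) % 2 := by
  unfold tm
  rcases Nat.eq_zero_or_pos (2 * m + b) with h | h
  · have hm : m = 0 := by omega
    have hb0 : b = 0 := by omega
    simp [hm, hb0]
  · rw [Nat.digits_def' (by norm_num : 1 < 2) h]
    have h1 : (2 * m + b) % 2 = b := by omega
    have h2 : (2 * m + b) / 2 = m := by omega
    rw [h1, h2, List.sum_cons]
    omega

lemma tm_two_compl (N : ℕ) : ∀ k < 2 ^ N, tm 2 (2 ^ N - 1 - k) = (N + tm 2 k) % 2 := by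
  induction N with
  | zero =>
    intro k hk
    interval_cases k
    simp [tm]
  | succ N ih =>
    intro k hk
    have hq : k / 2 < 2 ^ N := by
      have : 2 ^ (N + 1) = 2 * 2 ^ N := by ring
      omega
    have hb : k % 2 < 2 := Nat.mod_lt _ (by norm_num)
    have hdecomp : 2 ^ (N + 1) - 1 - k = 2 * (2 ^ N - 1 - k / 2) + (1 - k % 2) := by
      have : 2 ^ (N + 1) = 2 * 2 ^ N := by ring
      omega
    have hk2 : k = 2 * (k / 2) + k % 2 := by omega
    rw [hdecomp, tm_two_step _ _ (by omega), ih _ hq]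
    conv_rhs => rw [hk2, tm_two_step _ _ hb]
    have h1 : tm 2 (k / 2) < 2 := Nat.mod_lt _ (by norm_num)
    omega

/-- Every initial segment of the Thue–Morse sequence of length `4 ^ n` is a
palindrome. -/
theorem tm_two_initial_segment_palindrome (n : ℕ) (hn : 0 < n) (k : ℕ)
    (hk : k ≤ 4 ^ n - 1) : tm 2 k = tm 2 (4 ^ n - 1 - k) := by
  have h4 : (4 : ℕ) ^ n = 2 ^ (2 * n) := by
    rw [pow_mul]; norm_num
  have hpos : 0 < 2 ^ (2 * n) := Nat.pow_pos (by norm_num)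
  have hk' : k < 2 ^ (2 * n) := by omega
  rw [h4, tm_two_compl (2 * n) k hk']
  have h1 : tm 2 k < 2 := Nat.mod_lt _ (by norm_num)
  omega
end

section
/- For m ≥ 3, the word 011 occurs infinitely often in the TM_m sequence: the set of nonnegative integers k such that t_k = 0, t_{k+1} = 1, and t_{k+2} = 1 is infinite. -/
lemma sum_digits_split {m : ℕ} (hm : 2 ≤ m) (e n t : ℕ) (hn : n < m ^ e) (ht : 0 < t) :
    (Nat.digits m (n + m ^ e * t)).sum = (Nat.digits m n).sum + (Nat.digits m t).sum := by
  have hb : 1 < m := hm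
  have hlen : (Nat.digits m n).length ≤ e := by
    rcases eq_or_ne n 0 with rfl | hn0
    · simp
    · rw [Nat.digits_len m n hb hn0]
      have := (Nat.log_lt_iff_lt_pow hb hn0).mpr hn
      omega
  have he : (Nat.digits m n).length + (e - (Nat.digits m n).length) = e := by omega
  have := Nat.digits_append_zeroes_append_digits (b := m) (k := e - (Nat.digits m n).length)
    (m := t) (n := n) hb ht
  rw [he] at this
  rw [← this]
  simp

lemma sum_digits_pow_sub_one {m : ℕ} (hm : 2 ≤ m) (e : ℕ) :
    (Nat.digits m (m ^ e - 1)).sum = e * (m - 1) := by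
  induction e with
  | zero => simp
  | succ e ih =>
    have hb : 1 < m := hm
    have hP : 1 ≤ m ^ e := Nat.one_le_pow _ _ (by omega)
    have key : m ^ (e + 1) - 1 = m * (m ^ e - 1) + (m - 1) := by
      have : m ^ (e + 1) = m * m ^ e := by ring
      rw [this]
      have h1 : m * (m ^ e - 1) = m * m ^ e - m := by
        rw [Nat.mul_sub, mul_one]
      have h2 : m ≤ m * m ^ e := Nat.le_mul_of_pos_right m (by positivity)
      omega
    have hpos : 0 < m ^ (e + 1) - 1 := by
      have : m ≤ m ^ (e + 1) := Nat.le_self_pow (by omega) m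
      omega
    rw [Nat.digits_def' hb hpos, key]
    have hmod : (m * (m ^ e - 1) + (m - 1)) % m = m - 1 := by
      rw [Nat.mul_add_mod]
      exact Nat.mod_eq_of_lt (by omega)
    have hdiv : (m * (m ^ e - 1) + (m - 1)) / m = m ^ e - 1 := by
      rw [Nat.mul_add_div (by omega)]
      have : (m - 1) / m = 0 := Nat.div_eq_of_lt (by omega)
      omega
    rw [hmod, hdiv]
    rw [List.sum_cons, ih]
    ring

lemma sum_digits_pow_sub_two {m : ℕ} (hm : 3 ≤ m) (e : ℕ) (he : 1 ≤ e) :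
    (Nat.digits m (m ^ e - 2)).sum = (m - 2) + (e - 1) * (m - 1) := by
  have hb : 1 < m := by omega
  have hP : m ≤ m ^ e := Nat.le_self_pow (by omega) m
  have hP' : 1 ≤ m ^ (e - 1) := Nat.one_le_pow _ _ (by omega)
  have hee : m ^ e = m * m ^ (e - 1) := by
    conv_lhs => rw [show e = 1 + (e - 1) by omega]
    rw [pow_add, pow_one]
  have key : m ^ e - 2 = m * (m ^ (e - 1) - 1) + (m - 2) := by
    rw [hee]
    have h1 : m * (m ^ (e - 1) - 1) = m * m ^ (e - 1) - m := by
      rw [Nat.mul_sub, mul_one]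
    have h2 : m ≤ m * m ^ (e - 1) := Nat.le_mul_of_pos_right m (by positivity)
    omega
  have hpos : 0 < m ^ e - 2 := by omega
  rw [Nat.digits_def' hb hpos, key]
  have hmod : (m * (m ^ (e - 1) - 1) + (m - 2)) % m = m - 2 := by
    rw [Nat.mul_add_mod]
    exact Nat.mod_eq_of_lt (by omega)
  have hdiv : (m * (m ^ (e - 1) - 1) + (m - 2)) / m = m ^ (e - 1) - 1 := by
    rw [Nat.mul_add_div (by omega)]
    have : (m - 2) / m = 0 := Nat.div_eq_of_lt (by omega)
    omega
  rw [hmod, hdiv]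
  rw [List.sum_cons, sum_digits_pow_sub_one (by omega : 2 ≤ m)]

lemma sum_digits_small {m : ℕ} (hm : 2 ≤ m) (a : ℕ) (ha : 0 < a) (ha' : a < m) :
    (Nat.digits m a).sum = a := by
  rw [Nat.digits_def' (by omega : 1 < m) ha, Nat.mod_eq_of_lt ha',
    Nat.div_eq_of_lt ha']
  simp

/-- For `m ≥ 3`, the word `011` occurs infinitely often in the `TM_m` sequence. -/
theorem tm_011_infinitely_often (m : ℕ) (hm : 3 ≤ m) :
    {k : ℕ | tm m k = 0 ∧ tm m (k + 1) = 1 ∧ tm m (k + 2) = 1}.Infinite := by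
  have hm2 : 2 ≤ m := by omega
  obtain ⟨m', rfl⟩ : ∃ m', m = m' + 3 := ⟨m - 3, by omega⟩
  set m : ℕ := m' + 3 with hm_def
  set t : ℕ := m * (m - 1) + 1 with ht_def
  have ht : 0 < t := by positivity
  -- digit sum of t is m
  have hts : (Nat.digits m t).sum = m := by
    have : t = 1 + m ^ 1 * (m - 1) := by rw [ht_def]; ring_nf
    rw [this, sum_digits_split hm2 1 1 (m - 1) (by simpa using by omega : 1 < m ^ 1) (by omega)]
    rw [sum_digits_small hm2 1 one_pos (by omega),
      sum_digits_small hm2 (m - 1) (by omega) (by omega)]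
    omega
  set f : ℕ → ℕ := fun j => (m ^ (m - 1) - 2) + m ^ (m + j) * t with hf_def
  apply Set.infinite_of_injective_forall_mem (f := f)
  · -- injective: strictly monotone
    have : StrictMono f := by
      apply strictMono_nat_of_lt_succ
      intro j
      have : m ^ (m + j) < m ^ (m + (j + 1)) :=
        Nat.pow_lt_pow_right (by omega) (by omega)
      have := Nat.mul_lt_mul_of_lt_of_le this (le_refl t) ht
      simp only [hf_def]
      omega
    exact this.injective
  · intro j
    have hPm : m ^ (m - 1) < m ^ (m + j) := Nat.pow_lt_pow_right (by omega) (by omega)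
    have hP3 : 3 ≤ m ^ (m - 1) := le_trans hm (Nat.le_self_pow (by omega) m)
    constructor
    · -- tm m (f j) = 0
      have h0 : (Nat.digits m (f j)).sum
          = (Nat.digits m (m ^ (m - 1) - 2)).sum + (Nat.digits m t).sum :=
        sum_digits_split hm2 (m + j) _ t (by omega) ht
      rw [tm, h0, hts, sum_digits_pow_sub_two (by omega) (m - 1) (by omega)]
      have : m - 2 + (m - 1 - 1) * (m - 1) + m = (m' + 2) * m := by
        show m' + 1 + (m' + 1) * (m' + 2) + (m' + 3) = (m' + 2) * (m' + 3)
        ring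
      rw [this, Nat.mul_mod_left]
    constructor
    · -- tm m (f j + 1) = 1
      have heq : f j + 1 = (m ^ (m - 1) - 1) + m ^ (m + j) * t := by
        simp only [hf_def]; omega
      have h0 : (Nat.digits m ((m ^ (m - 1) - 1) + m ^ (m + j) * t)).sum
          = (Nat.digits m (m ^ (m - 1) - 1)).sum + (Nat.digits m t).sum :=
        sum_digits_split hm2 (m + j) _ t (by omega) ht
      rw [tm, heq, h0, hts, sum_digits_pow_sub_one hm2]
      have : (m - 1) * (m - 1) + m = m * (m' + 2) + 1 := by
        show (m' + 2) * (m' + 2) + (m' + 3) = (m' + 3) * (m' + 2) + 1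
        ring
      rw [this, Nat.mul_add_mod, Nat.mod_eq_of_lt (by omega)]
    · -- tm m (f j + 2) = 1
      have heq : f j + 2 = m ^ (m - 1) + m ^ (m + j) * t := by
        simp only [hf_def]; omega
      have h0 : (Nat.digits m (m ^ (m - 1) + m ^ (m + j) * t)).sum
          = (Nat.digits m (m ^ (m - 1))).sum + (Nat.digits m t).sum :=
        sum_digits_split hm2 (m + j) _ t (by omega) ht
      have hpow : (Nat.digits m (m ^ (m - 1))).sum = 1 := by
        have : m ^ (m - 1) = 0 + m ^ (m - 1) * 1 := by ring
        rw [this, sum_digits_split hm2 (m - 1) 0 1 (by positivity) one_pos]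
        simp [sum_digits_small hm2 1 one_pos (by omega)]
      rw [tm, heq, h0, hts, hpow, Nat.add_comm, Nat.add_mod_left,
        Nat.mod_eq_of_lt (by omega)]
end

section
/- For m ≥ 3, the word 110 never occurs in the TM_m sequence: there is no nonnegative integer k such that t_k = 1, t_{k+1} = 1, and t_{k+2} = 0. -/
lemma digitsSum_succ (m n : ℕ) (hm : 2 ≤ m) (h : (n + 1) % m ≠ 0) :
    (Nat.digits m (n + 1)).sum = (Nat.digits m n).sum + 1 := by
  have hm1 : 1 < m := hm
  have hmod : (n + 1) % m = (n % m + 1) % m := by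
    conv_lhs => rw [Nat.add_mod, Nat.one_mod_eq_one.mpr (by omega)]
  have hlt : n % m < m := Nat.mod_lt _ (by omega)
  have hne : n % m + 1 ≠ m := by
    intro he
    apply h
    rw [hmod, he, Nat.mod_self]
  have hmod' : (n + 1) % m = n % m + 1 := by
    rw [hmod, Nat.mod_eq_of_lt (by omega)]
  have hdiv : (n + 1) / m = n / m := by
    have e1 := Nat.div_add_mod (n + 1) m
    have e2 := Nat.div_add_mod n m
    rw [hmod'] at e1
    have : m * ((n + 1) / m) = m * (n / m) := by omega
    exact Nat.eq_of_mul_eq_mul_left (by omega) this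
  rcases Nat.eq_zero_or_pos n with rfl | hn
  · simp [Nat.digits_def' hm1 Nat.one_pos, Nat.mod_eq_of_lt hm1, Nat.div_eq_of_lt hm1]
  · rw [Nat.digits_def' hm1 (Nat.succ_pos n), Nat.digits_def' hm1 hn,
      List.sum_cons, List.sum_cons, hmod', hdiv]
    ring

lemma tm_succ (m n : ℕ) (hm : 2 ≤ m) (h : (n + 1) % m ≠ 0) :
    tm m (n + 1) = (tm m n + 1) % m := by
  unfold tm
  rw [digitsSum_succ m n hm h, Nat.mod_add_mod]

/-- For `m ≥ 3`, the word `110` never occurs in the `TM_m` sequence. -/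
theorem tm_110_never_occurs (m : ℕ) (hm : 3 ≤ m) :
    ¬ ∃ k : ℕ, tm m k = 1 ∧ tm m (k + 1) = 1 ∧ tm m (k + 2) = 0 := by
  rintro ⟨k, h1, h2, h3⟩
  have hm2 : 2 ≤ m := by omega
  by_cases hk : (k + 1) % m = 0
  · have hk2 : (k + 2) % m = 1 := by
      have : (k + 2) % m = ((k + 1) % m + 1) % m := by
        conv_lhs => rw [show k + 2 = (k + 1) + 1 by ring, Nat.add_mod,
          Nat.one_mod_eq_one.mpr (by omega)]
      rw [this, hk, Nat.mod_eq_of_lt (by omega)]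
    have := tm_succ m (k + 1) hm2 (by rw [show k + 1 + 1 = k + 2 by ring, hk2]; omega)
    rw [show k + 1 + 1 = k + 2 by ring, h2, Nat.mod_eq_of_lt (by omega)] at this
    omega
  · have := tm_succ m k hm2 hk
    rw [h1, h2, Nat.mod_eq_of_lt (by omega)] at this
    omega
end

section
/- Fix an integer m ≥ 2, let (t_j)_{j≥0} be the TM_m sequence and let t denote the corresponding infinite word t_0 t_1 t_2 …. Then for every positive integer n, the complexity function satisfies p_t(n) ≤ m³ · n, where p_t(n) is the number of distinct subwords of t of length n. -/
/-- The complexity function of the infinite word `a 0, a 1, a 2, ...`: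
the number of distinct factors (contiguous subwords) of length `n`. -/
noncomputable def complexity (a : ℕ → ℕ) (n : ℕ) : ℕ :=
  {w : List ℕ | ∃ i : ℕ, w = (List.range n).map fun k => a (i + k)}.ncard

lemma digitsum_step (m : ℕ) (hm : 2 ≤ m) (r : ℕ) :
    (Nat.digits m r).sum = r % m + (Nat.digits m (r / m)).sum := by
  rcases Nat.eq_zero_or_pos r with hr | hr
  · simp [hr]
  · rw [Nat.digits_def' (by omega : 1 < m) hr]
    simp

lemma digitsum_add (m : ℕ) (hm : 2 ≤ m) :
    ∀ k q r, r < m ^ k →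
      (Nat.digits m (q * m ^ k + r)).sum = (Nat.digits m q).sum + (Nat.digits m r).sum := by
  intro k
  induction k with
  | zero =>
    intro q r hr
    have : r = 0 := by simpa using hr
    simp [this]
  | succ k ih =>
    intro q r hr
    rcases Nat.eq_zero_or_pos q with hq | hq
    · simp [hq]
    · have hN : 0 < q * m ^ (k + 1) + r := by positivity
      rw [Nat.digits_def' (by omega : 1 < m) hN]
      have hrw : q * m ^ (k + 1) + r = r + q * m ^ k * m := by ring
      have hmod : (q * m ^ (k + 1) + r) % m = r % m := by
        rw [hrw, Nat.add_mul_mod_self_right]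
      have hdiv : (q * m ^ (k + 1) + r) / m = q * m ^ k + r / m := by
        rw [hrw, Nat.add_mul_div_right _ _ (by omega : 0 < m)]
        omega
      have hrm : r / m < m ^ k := by
        rw [Nat.div_lt_iff_lt_mul (by omega : 0 < m)]
        calc r < m ^ (k + 1) := hr
          _ = m ^ k * m := by ring
      rw [hmod, hdiv, List.sum_cons, ih q (r / m) hrm, digitsum_step m hm r]
      ring

lemma tm_add (m : ℕ) (hm : 2 ≤ m) (k q r : ℕ) (hr : r < m ^ k) :
    tm m (q * m ^ k + r) = (tm m q + tm m r) % m := by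
  simp only [tm]
  rw [digitsum_add m hm k q r hr, Nat.add_mod]

lemma tm_lt (m : ℕ) (hm : 2 ≤ m) (x : ℕ) : tm m x < m :=
  Nat.mod_lt _ (by omega)

/-- The complexity function of the `TM_m` sequence satisfies `p(n) ≤ m³ · n`. -/
theorem tm_complexity_le (m : ℕ) (hm : 2 ≤ m) (n : ℕ) (hn : 0 < n) :
    complexity (tm m) n ≤ m ^ 3 * n := by
  have h1 : 1 < m := hm
  set k := Nat.clog m n with hk
  have hnk : n ≤ m ^ k := Nat.le_pow_clog h1 n
  have hmk : 0 < m ^ k := pow_pos (by omega) k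
  set F : ℕ × ℕ × ℕ → List ℕ := fun p =>
    (List.range n).map fun j =>
      if p.1 + j < m ^ k then (p.2.1 + tm m (p.1 + j)) % m
      else (p.2.2 + tm m (p.1 + j - m ^ k)) % m with hF
  set S := (Finset.range (m ^ k)) ×ˢ (Finset.range m) ×ˢ (Finset.range m) with hS
  have hsub : {w : List ℕ | ∃ i : ℕ, w = (List.range n).map fun j => tm m (i + j)}
      ⊆ ↑(S.image F) := by
    rintro w ⟨i, rfl⟩
    simp only [Finset.coe_image, Set.mem_image, Finset.mem_coe]
    refine ⟨(i % m ^ k, tm m (i / m ^ k), tm m (i / m ^ k + 1)), ?_, ?_⟩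
    · simp only [hS, Finset.mem_product, Finset.mem_range]
      exact ⟨Nat.mod_lt _ hmk, tm_lt m hm _, tm_lt m hm _⟩
    · rw [hF]
      apply List.map_congr_left
      intro j hj
      have hjn : j < n := List.mem_range.mp hj
      set q := i / m ^ k with hq
      set r := i % m ^ k with hr
      have hrlt : r < m ^ k := Nat.mod_lt _ hmk
      have hi : i = q * m ^ k + r := (Nat.div_add_mod' i (m ^ k)).symm
      dsimp only
      by_cases hc : r + j < m ^ k
      · have : i + j = q * m ^ k + (r + j) := by omega
        simp only [hc, if_true]
        rw [this, tm_add m hm k q (r + j) hc]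
      · have hlt2 : r + j - m ^ k < m ^ k := by omega
        have : i + j = (q + 1) * m ^ k + (r + j - m ^ k) := by
          have : (q + 1) * m ^ k = q * m ^ k + m ^ k := by ring
          omega
        simp only [hc, if_false]
        rw [this, tm_add m hm k (q + 1) _ hlt2]
  have hcard : complexity (tm m) n ≤ (S.image F).card := by
    rw [complexity, ← Set.ncard_coe_finset]
    exact Set.ncard_le_ncard hsub (Finset.finite_toSet _)
  have hS2 : (S.image F).card ≤ m ^ k * (m * m) := by
    calc (S.image F).card ≤ S.card := Finset.card_image_le
      _ = m ^ k * (m * m) := by simp [hS]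
  have hkey : m ^ k ≤ m * n := by
    rcases Nat.eq_zero_or_pos k with h0 | hpos
    · rw [h0]; simpa using Nat.one_le_iff_ne_zero.mpr (by positivity)
    · have hn1 : 1 < n := by
        by_contra h
        have : n = 1 := by omega
        rw [this] at hk
        simp [Nat.clog_one_right] at hk
        omega
      have hpred := Nat.pow_pred_clog_lt_self h1 hn1
      rw [← hk, Nat.pred_eq_sub_one] at hpred
      have hkk : m ^ k = m * m ^ (k - 1) := by
        rw [← pow_succ']
        congr 1
        omega
      rw [hkk]
      exact Nat.mul_le_mul_left m (le_of_lt hpred)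
  calc complexity (tm m) n ≤ m ^ k * (m * m) := le_trans hcard hS2
    _ ≤ (m * n) * (m * m) := Nat.mul_le_mul_right _ hkey
    _ = m ^ 3 * n := by ring
end
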